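/- Let E and Ê be finite-dimensional real vector spaces, Q : Ê → E a linear map, Δ̂ a fan in Ê and Δ a fan in E. Assume that the assignment σ̂ ↦ Q(σ̂) defines a bijection from Δ̂^max onto Δ^max and a bijection from Δ̂^(1) onto Δ^(1). Then for every maximal cone σ̂ ∈ Δ̂^max, setting σ = Q(σ̂), the set of cones {τ̂ ∈ Δ̂ : Q(τ̂) ⊆ σ} is exactly the set of faces of σ̂. -/

import Mathlib

open scoped BigOperators

/-- The convex cone generated by a set `V`: all finite nonnegative linear combinations
of elements of `V`. -/
def coneGen {E : Type*} [AddCommGroup E] [Module ℝ E] (V : Set E) : Set E :=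
  {x | ∃ (n : ℕ) (c : Fin n → ℝ) (v : Fin n → E),
    (∀ i, 0 ≤ c i) ∧ (∀ i, v i ∈ V) ∧ x = ∑ i, c i • v i}

/-- A polyhedral cone is the convex cone generated by a finite set. -/
def IsPolyhedralCone {E : Type*} [AddCommGroup E] [Module ℝ E] (C : Set E) : Prop :=
  ∃ V : Set E, V.Finite ∧ C = coneGen V

/-- A cone `C` is salient if `x ∈ C` and `-x ∈ C` imply `x = 0`. -/
def SalientCone {E : Type*} [AddCommGroup E] [Module ℝ E] (C : Set E) : Prop :=
  ∀ x ∈ C, -x ∈ C → x = 0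

/-- A subset which is a convex cone: contains `0`, closed under addition and
nonnegative scalar multiplication. -/
def IsConeSet {E : Type*} [AddCommGroup E] [Module ℝ E] (C : Set E) : Prop :=
  (0 : E) ∈ C ∧ (∀ x ∈ C, ∀ y ∈ C, x + y ∈ C) ∧
    ∀ t : ℝ, 0 ≤ t → ∀ x ∈ C, t • x ∈ C

/-- A face of a convex cone `C` is a convex subcone which is an extreme subset of `C`. -/
def IsFaceOf {E : Type*} [AddCommGroup E] [Module ℝ E] (C F : Set E) : Prop :=
  IsConeSet F ∧ IsExtreme ℝ C F

/-- A fan: a finite set of salient polyhedral cones, closed under taking faces, such that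
the intersection of any two cones is a face of each of them. -/
def IsFan {E : Type*} [AddCommGroup E] [Module ℝ E] (Δ : Set (Set E)) : Prop :=
  Δ.Finite ∧ (∀ σ ∈ Δ, IsPolyhedralCone σ ∧ SalientCone σ) ∧
  (∀ σ ∈ Δ, ∀ F : Set E, IsFaceOf σ F → F ∈ Δ) ∧
  (∀ σ ∈ Δ, ∀ τ ∈ Δ, IsFaceOf σ (σ ∩ τ) ∧ IsFaceOf τ (σ ∩ τ))

/-- The set of inclusion-maximal cones of a fan. -/
def maxCones {E : Type*} [AddCommGroup E] [Module ℝ E] (Δ : Set (Set E)) : Set (Set E) :=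
  {σ | σ ∈ Δ ∧ ∀ τ ∈ Δ, σ ⊆ τ → σ = τ}

/-- A ray: the set of nonnegative multiples of a nonzero vector. -/
def IsRayCone {E : Type*} [AddCommGroup E] [Module ℝ E] (R : Set E) : Prop :=
  ∃ v : E, v ≠ 0 ∧ R = {x | ∃ t : ℝ, 0 ≤ t ∧ x = t • v}

/-- The set of rays (one-dimensional cones) of a fan. -/
def rayCones {E : Type*} [AddCommGroup E] [Module ℝ E] (Δ : Set (Set E)) : Set (Set E) :=
  {ρ | ρ ∈ Δ ∧ IsRayCone ρ}

section aux
variable {E : Type*} [AddCommGroup E] [Module ℝ E]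

def rayOf (v : E) : Set E := {x | ∃ t : ℝ, 0 ≤ t ∧ x = t • v}

lemma isConeSet_rayOf (v : E) : IsConeSet (rayOf v) := by
  refine ⟨⟨0, le_refl _, (zero_smul ℝ v).symm⟩, ?_, ?_⟩
  · rintro x ⟨t, ht, rfl⟩ y ⟨s, hs, rfl⟩
    exact ⟨t + s, add_nonneg ht hs, (add_smul t s v).symm⟩
  · rintro t ht x ⟨s, hs, rfl⟩
    exact ⟨t * s, mul_nonneg ht hs, (mul_smul t s v).symm⟩

lemma zero_mem_coneGen (V : Set E) : (0:E) ∈ coneGen V :=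
  ⟨0, Fin.elim0, Fin.elim0, fun i => i.elim0, fun i => i.elim0, by simp⟩

lemma mem_coneGen_of_mem {V : Set E} {v : E} (h : v ∈ V) : v ∈ coneGen V :=
  ⟨1, fun _ => 1, fun _ => v, fun _ => zero_le_one, fun _ => h, by simp⟩

lemma coneGen_subset {V C : Set E} (hVC : V ⊆ C) (hC : IsConeSet C) : coneGen V ⊆ C := by
  rintro x ⟨n, c, v, hc, hv, rfl⟩
  exact Finset.sum_induction _ (· ∈ C) (fun a b ha hb => hC.2.1 a ha b hb) hC.1
    (fun i _ => hC.2.2 (c i) (hc i) (v i) (hVC (hv i)))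

lemma isConeSet_coneGen (V : Set E) : IsConeSet (coneGen V) := by
  refine ⟨zero_mem_coneGen V, ?_, ?_⟩
  · rintro x ⟨n, c, v, hc, hv, rfl⟩ y ⟨m, d, w, hd, hw, rfl⟩
    refine ⟨n + m, Fin.append c d, Fin.append v w, ?_, ?_, ?_⟩
    · intro i
      refine Fin.addCases (fun j => ?_) (fun j => ?_) i
      · simpa [Fin.append_left] using hc j
      · simpa [Fin.append_right] using hd j
    · intro i
      refine Fin.addCases (fun j => ?_) (fun j => ?_) i
      · simpa [Fin.append_left] using hv j
      · simpa [Fin.append_right] using hw j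
    · rw [Fin.sum_univ_add]
      simp [Fin.append_left, Fin.append_right]
  · rintro t ht x ⟨n, c, v, hc, hv, rfl⟩
    exact ⟨n, fun i => t * c i, v, fun i => mul_nonneg ht (hc i), hv,
      by rw [Finset.smul_sum]; simp [mul_smul]⟩

lemma sum_mem_coneSet {C : Set E} (hC : IsConeSet C) {ι : Type*} {s : Finset ι} {f : ι → E}
    (hf : ∀ i ∈ s, f i ∈ C) : ∑ i ∈ s, f i ∈ C :=
  Finset.sum_induction f (· ∈ C) (fun a b ha hb => hC.2.1 a ha b hb) hC.1 hf

lemma mem_coneGen_finset {V : Finset E} {x : E} :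
    x ∈ coneGen (V : Set E) ↔ ∃ c : E → ℝ, (∀ u, 0 ≤ c u) ∧ x = ∑ u ∈ V, c u • u := by
  classical
  constructor
  · rintro ⟨n, c, v, hc, hv, rfl⟩
    induction n with
    | zero => exact ⟨fun _ => 0, fun _ => le_refl _, by simp⟩
    | succ n ih =>
      obtain ⟨d, hd, hsum⟩ := ih (fun i => c i.succ) (fun i => v i.succ)
        (fun i => hc i.succ) (fun i => hv i.succ)
      refine ⟨fun u => (if u = v 0 then c 0 else 0) + d u,
        fun u => add_nonneg (by split <;> [exact hc 0; exact le_refl _]) (hd u), ?_⟩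
      rw [Fin.sum_univ_succ]
      have h1 : ∑ u ∈ V, ((if u = v 0 then c 0 else 0) + d u) • u
          = ∑ u ∈ V, (if u = v 0 then c 0 else 0) • u + ∑ u ∈ V, d u • u := by
        rw [← Finset.sum_add_distrib]
        exact Finset.sum_congr rfl fun u _ => add_smul _ _ _
      rw [h1, ← hsum]
      congr 1
      have h2 : ∑ u ∈ V, (if u = v 0 then c 0 else 0) • u
          = ∑ u ∈ V, (if u = v 0 then c 0 • u else 0) := by
        exact Finset.sum_congr rfl fun u _ => by split <;> simp
      rw [h2, Finset.sum_ite_eq' V (v 0) (fun u => c 0 • u),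
        if_pos (show v 0 ∈ V by exact_mod_cast hv 0)]
  · rintro ⟨c, hc, rfl⟩
    exact sum_mem_coneSet (isConeSet_coneGen _)
      (fun u hu => (isConeSet_coneGen _).2.2 (c u) (hc u) u (mem_coneGen_of_mem hu))

lemma salient_split {C : Set E} (hs : SalientCone C) {x y : E} (hx : x ∈ C) (hy : y ∈ C)
    (hxy : x + y = 0) : x = 0 ∧ y = 0 := by
  have h1 : y = -x := eq_neg_of_add_eq_zero_right hxy
  have hx0 : x = 0 := hs x hx (h1 ▸ hy)
  exact ⟨hx0, by rw [h1, hx0, neg_zero]⟩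

lemma salient_sum_eq_zero {C : Set E} (hC : IsConeSet C) (hs : SalientCone C)
    {ι : Type*} {s : Finset ι} {f : ι → E} (hf : ∀ i ∈ s, f i ∈ C) (h : ∑ i ∈ s, f i = 0) :
    ∀ i ∈ s, f i = 0 := by
  classical
  intro i hi
  have h1 : f i + ∑ j ∈ s.erase i, f j = 0 := by
    rw [Finset.add_sum_erase _ _ hi]; exact h
  exact (salient_split hs (hf i hi)
    (sum_mem_coneSet hC fun j hj => hf j (Finset.mem_of_mem_erase hj)) h1).1

lemma face_add {C F : Set E} (hF : IsFaceOf C F) {x y : E} (hx : x ∈ C) (hy : y ∈ C)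
    (hxy : x + y ∈ F) : x ∈ F ∧ y ∈ F := by
  have hz : (2⁻¹ : ℝ) • (x + y) ∈ F := hF.1.2.2 _ (by norm_num) _ hxy
  exact ⟨hF.2.2 hx hy hz ⟨2⁻¹, 2⁻¹, by norm_num, by norm_num, by norm_num, by rw [smul_add]⟩,
    hF.2.2 hy hx hz ⟨2⁻¹, 2⁻¹, by norm_num, by norm_num, by norm_num, by rw [smul_add, add_comm]⟩⟩

lemma face_sum {C F : Set E} (hC : IsConeSet C) (hF : IsFaceOf C F) {ι : Type*} {s : Finset ι}
    {f : ι → E} (hf : ∀ i ∈ s, f i ∈ C) (h : ∑ i ∈ s, f i ∈ F) : ∀ i ∈ s, f i ∈ F := by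
  classical
  intro i hi
  have h1 : f i + ∑ j ∈ s.erase i, f j ∈ F := by
    rw [Finset.add_sum_erase _ _ hi]; exact h
  exact (face_add hF (hf i hi)
    (sum_mem_coneSet hC fun j hj => hf j (Finset.mem_of_mem_erase hj)) h1).1

end aux
section mink
variable {E : Type*} [AddCommGroup E] [Module ℝ E]

lemma rayOf_subset_coneGen {V : Set E} {v : E} (hv : v ∈ V) : rayOf v ⊆ coneGen V := by
  rintro x ⟨t, ht, rfl⟩
  exact (isConeSet_coneGen V).2.2 t ht v (mem_coneGen_of_mem hv)

lemma rayOf_face_of_not_removable [DecidableEq E] {V : Finset E} {v : E} (hv : v ∈ V)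
    (hsal : SalientCone (coneGen (V : Set E)))
    (hnr : v ∉ coneGen ((V.erase v : Finset E) : Set E)) :
    IsFaceOf (coneGen (V : Set E)) (rayOf v) := by
  have hC : IsConeSet (coneGen (V : Set E)) := isConeSet_coneGen _
  refine ⟨isConeSet_rayOf v, rayOf_subset_coneGen (by exact_mod_cast hv), ?_⟩
  rintro x₁ hx₁ x₂ hx₂ z ⟨s, hs, rfl⟩ ⟨α, β, hα, hβ, hαβ, hz⟩
  obtain ⟨a, ha, rfl⟩ := mem_coneGen_finset.mp hx₁
  obtain ⟨b, hb, rfl⟩ := mem_coneGen_finset.mp hx₂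
  set c : E → ℝ := fun u => α * a u + β * b u with hcdef
  have hcs : ∑ u ∈ V, c u • u = s • v := by
    rw [← hz, Finset.smul_sum, Finset.smul_sum, ← Finset.sum_add_distrib]
    exact Finset.sum_congr rfl fun u _ => by
      simp only [hcdef, add_smul, mul_smul]
  have hcnn : ∀ u, 0 ≤ c u := fun u =>
    add_nonneg (mul_nonneg hα.le (ha u)) (mul_nonneg hβ.le (hb u))
  have herase : ∑ u ∈ V.erase v, c u • u = s • v - c v • v := by
    rw [← hcs, ← Finset.add_sum_erase V (fun u => c u • u) hv]; abel
  by_cases hsc : s ≤ c v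
  · -- the sum (c v - s) • v + Σ_erase equals 0
    have hzero : (c v - s) • v + ∑ u ∈ V.erase v, c u • u = 0 := by
      rw [herase, sub_smul]; abel
    have hsplit := salient_split hsal
      (hC.2.2 _ (sub_nonneg.mpr hsc) v (mem_coneGen_of_mem (by exact_mod_cast hv)))
      (sum_mem_coneSet hC fun u hu => hC.2.2 (c u) (hcnn u) u
        (mem_coneGen_of_mem (by exact_mod_cast Finset.mem_of_mem_erase hu)))
      hzero
    have hterms : ∀ u ∈ V.erase v, c u • u = 0 :=
      salient_sum_eq_zero hC hsal
        (fun u hu => hC.2.2 (c u) (hcnn u) u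
          (mem_coneGen_of_mem (by exact_mod_cast Finset.mem_of_mem_erase hu)))
        hsplit.2
    have hab : ∀ u ∈ V.erase v, a u • u = 0 ∧ b u • u = 0 := by
      intro u hu
      rcases smul_eq_zero.mp (hterms u hu) with hcu | hu0
      · have ha0 : α * a u = 0 := by
          have h1 : 0 ≤ α * a u := mul_nonneg hα.le (ha u)
          have h2 : 0 ≤ β * b u := mul_nonneg hβ.le (hb u)
          have : α * a u + β * b u = 0 := hcu
          linarith
        have hb0 : β * b u = 0 := by
          have h1 : 0 ≤ α * a u := mul_nonneg hα.le (ha u)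
          have : α * a u + β * b u = 0 := hcu
          linarith
        constructor
        · rw [(mul_eq_zero.mp ha0).resolve_left hα.ne', zero_smul]
        · rw [(mul_eq_zero.mp hb0).resolve_left hβ.ne', zero_smul]
      · simp [hu0]
    · refine ⟨a v, ha v, ?_⟩
      rw [← Finset.add_sum_erase V (fun u => a u • u) hv,
        Finset.sum_eq_zero (fun u hu => (hab u hu).1), add_zero]
  · exfalso
    apply hnr
    push_neg at hsc
    have h3 : ∑ u ∈ V.erase v, c u • u = (s - c v) • v := by
      rw [herase, sub_smul]
    have hmem : (s - c v) • v ∈ coneGen ((V.erase v : Finset E) : Set E) :=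
      mem_coneGen_finset.mpr ⟨c, hcnn, h3.symm⟩
    have hmem2 := (isConeSet_coneGen ((V.erase v : Finset E) : Set E)).2.2
      (s - c v)⁻¹ (inv_nonneg.mpr (sub_pos.mpr hsc).le) _ hmem
    rwa [smul_smul, inv_mul_cancel₀ (sub_pos.mpr hsc).ne', one_smul] at hmem2

lemma minkowski : ∀ (V : Finset E), SalientCone (coneGen (V : Set E)) →
    ∃ V' : Finset E, coneGen ((V' : Finset E) : Set E) = coneGen (V : Set E) ∧
      ∀ v ∈ V', IsFaceOf (coneGen (V : Set E)) (rayOf v) := by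
  classical
  intro V
  induction V using Finset.strongInduction with
  | _ V ih =>
    intro hsal
    by_cases hall : ∀ v ∈ V, IsFaceOf (coneGen (V : Set E)) (rayOf v)
    · exact ⟨V, rfl, hall⟩
    · push_neg at hall
      obtain ⟨v, hv, hnf⟩ := hall
      have hrem : v ∈ coneGen ((V.erase v : Finset E) : Set E) := by
        by_contra hnr
        exact hnf (rayOf_face_of_not_removable hv hsal hnr)
      have heq : coneGen ((V.erase v : Finset E) : Set E) = coneGen (V : Set E) := by
        apply Set.Subset.antisymm
        · exact coneGen_subset
            (fun u hu => mem_coneGen_of_mem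
              (by exact_mod_cast Finset.mem_of_mem_erase (by exact_mod_cast hu)))
            (isConeSet_coneGen _)
        · refine coneGen_subset ?_ (isConeSet_coneGen _)
          intro u hu
          by_cases h : u = v
          · exact h ▸ hrem
          · exact mem_coneGen_of_mem
              (by exact_mod_cast Finset.mem_erase.mpr ⟨h, by exact_mod_cast hu⟩)
      obtain ⟨V', hV'eq, hV'face⟩ := ih (V.erase v) (Finset.erase_ssubset hv) (heq ▸ hsal)
      exact ⟨V', hV'eq.trans heq, fun u hu => heq ▸ hV'face u hu⟩

end mink

section fan
variable {E : Type*} [AddCommGroup E] [Module ℝ E]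

lemma fan_mem_coneSet {Δ : Set (Set E)} (hΔ : IsFan Δ) {σ : Set E} (hσ : σ ∈ Δ) :
    IsConeSet σ := by
  obtain ⟨V, -, rfl⟩ := (hΔ.2.1 σ hσ).1
  exact isConeSet_coneGen V

lemma fan_minkowski {Δ : Set (Set E)} (hΔ : IsFan Δ) {σ : Set E} (hσ : σ ∈ Δ) :
    ∃ V' : Finset E, coneGen ((V' : Finset E) : Set E) = σ ∧
      ∀ v ∈ V', IsFaceOf σ (rayOf v) := by
  obtain ⟨⟨V, hVfin, hσeq⟩, hsal⟩ := hΔ.2.1 σ hσ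
  have hcoe : coneGen ((hVfin.toFinset : Finset E) : Set E) = σ := by
    rw [Set.Finite.coe_toFinset, ← hσeq]
  obtain ⟨V', h1, h2⟩ := minkowski hVfin.toFinset (by rw [hcoe]; exact hsal)
  rw [hcoe] at h1 h2
  exact ⟨V', h1, h2⟩
end fan

section main
variable {E Ehat : Type*} [AddCommGroup E] [Module ℝ E] [AddCommGroup Ehat] [Module ℝ Ehat]

lemma ray_lift (Q : Ehat →ₗ[ℝ] E) {Dhat : Set (Set Ehat)} {D : Set (Set E)}
    (hDhat : IsFan Dhat) (hD : IsFan D)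
    {σhat : Set Ehat} (hσhatD : σhat ∈ Dhat) (hσimg : Q '' σhat ∈ D)
    {ρ : Set E} (hρray : ρ ∈ rayCones D) (hρsub : ρ ⊆ Q '' σhat) :
    ∃ ρhat ∈ rayCones Dhat, ρhat ⊆ σhat ∧ Q '' ρhat = ρ := by
  obtain ⟨hρD, w, hw0, rfl⟩ := hρray
  -- ρ = rayOf w
  have hface : IsFaceOf (Q '' σhat) (rayOf w) := by
    have hρsub' : rayOf w ⊆ Q '' σhat := hρsub
    have h := (hD.2.2.2 (Q '' σhat) hσimg (rayOf w) hρD).1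
    rwa [Set.inter_eq_self_of_subset_right hρsub'] at h
  have hwρ : w ∈ rayOf w := ⟨1, zero_le_one, (one_smul ℝ w).symm⟩
  obtain ⟨what, hwhatσ, hwhat⟩ := hρsub hwρ
  obtain ⟨V', hV'gen, hV'face⟩ := fan_minkowski hDhat hσhatD
  have hwhatV : what ∈ coneGen ((V' : Finset Ehat) : Set Ehat) := hV'gen ▸ hwhatσ
  obtain ⟨c, hc, hwsum⟩ := mem_coneGen_finset.mp hwhatV
  have hQσ : IsConeSet (Q '' σhat) := fan_mem_coneSet hD hσimg
  have hterm : ∀ u ∈ V', c u • Q u ∈ Q '' σhat := by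
    intro u hu
    have huσ : u ∈ σhat := hV'gen ▸ mem_coneGen_of_mem (by exact_mod_cast hu)
    exact hQσ.2.2 (c u) (hc u) _ ⟨u, huσ, rfl⟩
  have hsum : ∑ u ∈ V', c u • Q u = w := by
    rw [← hwhat, hwsum, map_sum]
    exact Finset.sum_congr rfl fun u _ => (map_smul Q (c u) u).symm
  have htermρ : ∀ u ∈ V', c u • Q u ∈ rayOf w :=
    face_sum hQσ hface hterm (hsum ▸ hwρ)
  have hne : ∃ u ∈ V', c u • Q u ≠ 0 := by
    by_contra hno
    push_neg at hno
    exact hw0 (by rw [← hsum, Finset.sum_eq_zero hno])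
  obtain ⟨u, huV, hu0⟩ := hne
  have hcu : c u ≠ 0 := fun h => hu0 (by rw [h, zero_smul])
  have hQu0 : Q u ≠ 0 := fun h => hu0 (by rw [h, smul_zero])
  have hu0' : u ≠ 0 := fun h => hQu0 (by rw [h, map_zero])
  have hρcone : IsConeSet (rayOf w) := isConeSet_rayOf w
  have hQuρ : Q u ∈ rayOf w := by
    have := hρcone.2.2 (c u)⁻¹ (inv_nonneg.mpr (hc u)) _ (htermρ u huV)
    rwa [smul_smul, inv_mul_cancel₀ hcu, one_smul] at this
  have hfaceu : IsFaceOf σhat (rayOf u) := hV'face u huV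
  refine ⟨rayOf u, ⟨hDhat.2.2.1 σhat hσhatD _ hfaceu, ⟨u, hu0', rfl⟩⟩, hfaceu.2.1, ?_⟩
  -- Q '' rayOf u = rayOf w
  obtain ⟨s, hs, hQus⟩ := hQuρ
  have hs0 : s ≠ 0 := fun h => hQu0 (by rw [hQus, h, zero_smul])
  have hspos : 0 < s := lt_of_le_of_ne hs (Ne.symm hs0)
  ext x
  constructor
  · rintro ⟨_, ⟨t, ht, rfl⟩, rfl⟩
    exact ⟨t * s, mul_nonneg ht hs, by rw [map_smul, hQus, smul_smul]⟩
  · rintro ⟨t, ht, rfl⟩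
    refine ⟨(t / s) • u, ⟨t / s, div_nonneg ht hs, rfl⟩, ?_⟩
    rw [map_smul, hQus, smul_smul, div_mul_cancel₀ t hs0]

lemma mapped_into_subset (Q : Ehat →ₗ[ℝ] E) {Dhat : Set (Set Ehat)} {D : Set (Set E)}
    (hDhat : IsFan Dhat) (hD : IsFan D)
    (hray : Set.BijOn (fun σ : Set Ehat => Q '' σ) (rayCones Dhat) (rayCones D))
    {σhat : Set Ehat} (hσhatD : σhat ∈ Dhat) (hσimg : Q '' σhat ∈ D)
    {τhat : Set Ehat} (hτD : τhat ∈ Dhat) (hsub : Q '' τhat ⊆ Q '' σhat) :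
    τhat ⊆ σhat := by
  obtain ⟨V', hV'gen, hV'face⟩ := fan_minkowski hDhat hτD
  have hV'sub : ((V' : Finset Ehat) : Set Ehat) ⊆ σhat := by
    intro v hvV
    by_cases hv0 : v = 0
    · exact hv0 ▸ (fan_mem_coneSet hDhat hσhatD).1
    · have hfacev : IsFaceOf τhat (rayOf v) := hV'face v (by exact_mod_cast hvV)
      have hρhatD : rayOf v ∈ rayCones Dhat :=
        ⟨hDhat.2.2.1 τhat hτD _ hfacev, ⟨v, hv0, rfl⟩⟩
      have hρray : Q '' rayOf v ∈ rayCones D := hray.mapsTo hρhatD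
      have hρsub : Q '' rayOf v ⊆ Q '' σhat :=
        (Set.image_mono (f := Q) hfacev.2.1).trans hsub
      obtain ⟨ρhat', hρhat'ray, hρhat'sub, hρhat'eq⟩ :=
        ray_lift Q hDhat hD hσhatD hσimg hρray hρsub
      have : ρhat' = rayOf v := hray.injOn hρhat'ray hρhatD hρhat'eq
      exact (this ▸ hρhat'sub) ⟨1, zero_le_one, (one_smul ℝ v).symm⟩
  calc τhat = coneGen ((V' : Finset Ehat) : Set Ehat) := hV'gen.symm
    _ ⊆ σhat := coneGen_subset hV'sub (fan_mem_coneSet hDhat hσhatD)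

end main

/-- If `Q` induces bijections on maximal cones and on rays, then for each maximal
cone `σ̂` of `Δ̂`, the cones of `Δ̂` mapped into `σ = Q(σ̂)` are exactly the faces of `σ̂`. -/
theorem quotient_presentation_fan_chart
    {E Ehat : Type*} [AddCommGroup E] [Module ℝ E] [FiniteDimensional ℝ E]
    [AddCommGroup Ehat] [Module ℝ Ehat] [FiniteDimensional ℝ Ehat]
    (Q : Ehat →ₗ[ℝ] E) (Dhat : Set (Set Ehat)) (D : Set (Set E))
    (hDhat : IsFan Dhat) (hD : IsFan D)
    (hmax : Set.BijOn (fun σ : Set Ehat => Q '' σ) (maxCones Dhat) (maxCones D))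
    (hray : Set.BijOn (fun σ : Set Ehat => Q '' σ) (rayCones Dhat) (rayCones D)) :
    ∀ σhat ∈ maxCones Dhat,
      {τ | τ ∈ Dhat ∧ Q '' τ ⊆ Q '' σhat} = {F : Set Ehat | IsFaceOf σhat F} := by
  intro σhat hσhatmax
  have hσhatD : σhat ∈ Dhat := hσhatmax.1
  have hσimg : Q '' σhat ∈ D := (hmax.mapsTo hσhatmax).1
  ext τ
  simp only [Set.mem_setOf_eq]
  constructor
  · rintro ⟨hτD, hsub⟩
    have hts : τ ⊆ σhat := mapped_into_subset Q hDhat hD hray hσhatD hσimg hτD hsub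
    have h := (hDhat.2.2.2 σhat hσhatD τ hτD).1
    rwa [Set.inter_eq_self_of_subset_right hts] at h
  · intro hF
    exact ⟨hDhat.2.2.1 σhat hσhatD τ hF, Set.image_mono (f := Q) hF.2.1⟩
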